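/- Let (P,≤) be a poset, U ⊆ P an up-set and D ⊆ P a down-set, and k a field. Then the vector space of natural transformations Hom(k[U], k[D]) is isomorphic to k^{π₀(U ∩ D)}, the functions from the set of connected components of U ∩ D to k. -/

import Mathlib

open CategoryTheory

noncomputable section
attribute [local instance] Classical.propDecidable
set_option linter.unusedSectionVars false

variable (R : Type) [Ring R] {P : Type} [Preorder P]

/-- Condition that a subset is order-convex. -/
def IsConvexSet (I : Set P) : Prop := ∀ ⦃x y z : P⦄, x ∈ I → z ∈ I → x ≤ y → y ≤ z → y ∈ I

/-- The value of the interval persistence module at a point. -/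
def intervalObj (I : Set P) (a : P) : Submodule R R :=
  if a ∈ I then (⊤ : Submodule R R) else ⊥

lemma intervalObj_eq_zero {I : Set P} {a : P} (h : a ∉ I) (x : intervalObj R I a) :
    x = 0 := by
  have hx := x.2
  simp only [intervalObj, if_neg h, Submodule.mem_bot] at hx
  exact Subtype.ext hx

/-- The structure map of the interval module between two degrees. -/
def intervalMapAux (I : Set P) (a b : P) :
    (intervalObj R I a) →ₗ[R] (intervalObj R I b) :=
  if h : a ∈ I ∧ b ∈ I then
    Submodule.inclusion (by simp [intervalObj, h.1, h.2])
  else 0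

lemma intervalMapAux_coe {I : Set P} {a b : P} (ha : a ∈ I) (hb : b ∈ I)
    (x : intervalObj R I a) : ((intervalMapAux R I a b x : R)) = (x : R) := by
  simp [intervalMapAux, ha, hb]

lemma intervalMapAux_of_not {I : Set P} {a b : P} (h : ¬(a ∈ I ∧ b ∈ I))
    (x : intervalObj R I a) : intervalMapAux R I a b x = 0 := by
  simp [intervalMapAux, h]

/-- The interval (indicator) persistence module of a convex set `I`,
as a functor from the preorder `P` to `R`-modules. -/
def intervalModule (I : Set P) (hI : IsConvexSet I) : P ⥤ ModuleCat R where
  obj a := ModuleCat.of R (intervalObj R I a)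
  map {a b} f := ModuleCat.ofHom (intervalMapAux R I a b)
  map_id a := by
    ext x
    by_cases h : a ∈ I
    · exact intervalMapAux_coe R h h x
    · rw [intervalObj_eq_zero R h x]
      simp
  map_comp {a b c} f g := by
    ext x
    show ((intervalMapAux R I a c x : intervalObj R I c) : R) =
      ((intervalMapAux R I b c (intervalMapAux R I a b x) : intervalObj R I c) : R)
    by_cases ha : a ∈ I
    · by_cases hc : c ∈ I
      · have hb : b ∈ I := hI ha hc (leOfHom f) (leOfHom g)
        rw [intervalMapAux_coe R ha hc, intervalMapAux_coe R hb hc,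
          intervalMapAux_coe R ha hb]
      · rw [intervalMapAux_of_not R (fun h => hc h.2),
          intervalMapAux_of_not R (fun h => hc h.2)]
    · rw [intervalObj_eq_zero R ha x]
      simp

end

lemma IsConvexSet.of_ordConnected {P : Type} [Preorder P] {s : Set P}
    (h : s.OrdConnected) : IsConvexSet s :=
  fun _ _ _ hx hz hxy hyz => h.out hx hz ⟨hxy, hyz⟩

/-- The zigzag (comparability) setoid on a subset of a preordered set: the equivalence
relation generated by comparability within the subset. -/
def zigzagSetoid {P : Type} [Preorder P] (S : Set P) : Setoid S :=
  Relation.EqvGen.setoid (fun x y : S => (x : P) ≤ y ∨ (y : P) ≤ x)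

/-- The set of zigzag-connected components of a subset of a preordered set. -/
def pi0 {P : Type} [Preorder P] (S : Set P) : Type :=
  Quotient (zigzagSetoid S)

namespace HomUD

open CategoryTheory

noncomputable section
attribute [local instance] Classical.propDecidable

variable (k : Type) [Field k] {P : Type} [PartialOrder P] (U D : Set P)

/-- The canonical generator `1` of the interval module at a point of `I`. -/
def oneOf {I : Set P} {a : P} (h : a ∈ I) : intervalObj k I a :=
  ⟨1, by simp [intervalObj, h]⟩

lemma coe_oneOf {I : Set P} {a : P} (h : a ∈ I) : ((oneOf k h : intervalObj k I a) : k) = 1 :=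
  rfl

lemma smul_oneOf {I : Set P} {a : P} (h : a ∈ I) (x : intervalObj k I a) :
    (x : k) • oneOf k h = x := Subtype.ext (by simp [oneOf])

/-- The component at `a` of the natural transformation associated to a function on `π₀`. -/
def appAux (f : pi0 (U ∩ D) → k) (a : P) :
    intervalObj k U a →ₗ[k] intervalObj k D a :=
  if h : a ∈ U ∩ D then
    f (Quotient.mk (zigzagSetoid (U ∩ D)) ⟨a, h⟩) •
      LinearMap.codRestrict _ (Submodule.subtype _)
        (fun x => by simp [intervalObj, h.2])
  else 0

lemma appAux_coe (f : pi0 (U ∩ D) → k) {a : P} (h : a ∈ U ∩ D)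
    (x : intervalObj k U a) :
    ((appAux k U D f a x : k)) =
      f (Quotient.mk (zigzagSetoid (U ∩ D)) ⟨a, h⟩) * (x : k) := by
  simp [appAux, h, smul_eq_mul]
  exact Or.inl rfl

lemma appAux_of_not (f : pi0 (U ∩ D) → k) {a : P} (h : a ∉ U ∩ D)
    (x : intervalObj k U a) : appAux k U D f a x = 0 := by
  simp [appAux, h]

variable (hU : IsUpperSet U) (hD : IsLowerSet D)

/-- The natural transformation associated to a function on `π₀(U ∩ D)`. -/
def ofFun (f : pi0 (U ∩ D) → k) :
    intervalModule k U (fun _ _ _ hx _ hxy _ => hU hxy hx) ⟶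
      intervalModule k D (fun _ _ _ _ hz _ hyz => hD hyz hz) where
  app a := ModuleCat.ofHom (appAux k U D f a)
  naturality {a b} g := by
    apply ModuleCat.hom_ext; apply LinearMap.ext; intro (x : intervalObj k U a)
    show appAux k U D f b (intervalMapAux k U a b x)
      = intervalMapAux k D a b (appAux k U D f a x)
    have hab : a ≤ b := leOfHom g
    by_cases ha : a ∈ U
    · have hbU : b ∈ U := hU hab ha
      by_cases haD : a ∈ D
      · by_cases hbD : b ∈ D
        · have hfe : f (Quotient.mk (zigzagSetoid (U ∩ D)) ⟨b, hbU, hbD⟩)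
              = f (Quotient.mk (zigzagSetoid (U ∩ D)) ⟨a, ha, haD⟩) := by
            refine congrArg f (Quotient.sound ?_)
            exact Relation.EqvGen.rel _ _ (Or.inr hab)
          apply Subtype.ext
          rw [appAux_coe k U D f ⟨hbU, hbD⟩, intervalMapAux_coe k ha hbU,
            intervalMapAux_coe k haD hbD, appAux_coe k U D f ⟨ha, haD⟩, hfe]
        · rw [appAux_of_not k U D f (fun h => hbD h.2),
            intervalMapAux_of_not k (fun h => hbD h.2)]
      · have hbD : b ∉ D := fun hb => haD (hD hab hb)
        rw [appAux_of_not k U D f (fun h => hbD h.2)]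
        rw [appAux_of_not k U D f (fun h => haD h.2)]
        exact ((intervalMapAux k D a b).map_zero).symm
    · rw [intervalObj_eq_zero k ha x, (intervalMapAux k U a b).map_zero,
        (appAux k U D f b).map_zero, (appAux k U D f a).map_zero]
      exact ((intervalMapAux k D a b).map_zero).symm

/-- Evaluation of a natural transformation at the generator at a point of `U`. -/
def evalAt
    (η : intervalModule k U (fun _ _ _ hx _ hxy _ => hU hxy hx) ⟶
      intervalModule k D (fun _ _ _ _ hz _ hyz => hD hyz hz))
    {a : P} (h : a ∈ U) : intervalObj k D a :=
  η.app a (oneOf k h)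

lemma nat_const
    (η : intervalModule k U (fun _ _ _ hx _ hxy _ => hU hxy hx) ⟶
      intervalModule k D (fun _ _ _ _ hz _ hyz => hD hyz hz))
    {a b : P} (ha : a ∈ U ∩ D) (hb : b ∈ U ∩ D) (hab : a ≤ b) :
    ((evalAt k U D hU hD η hb.1 : k)) = ((evalAt k U D hU hD η ha.1 : k)) := by
  have h := η.naturality (homOfLE hab)
  have h2 := congrArg (fun g => g (oneOf k ha.1)) h
  simp only [CategoryTheory.comp_apply] at h2
  have e1 : intervalMapAux k U a b (oneOf k ha.1) = oneOf k hb.1 :=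
    Subtype.ext (by rw [intervalMapAux_coe k ha.1 hb.1]; rfl)
  have h3 : evalAt k U D hU hD η hb.1
      = intervalMapAux k D a b (evalAt k U D hU hD η ha.1) := by
    show η.app b (oneOf k hb.1) = _
    rw [← e1]
    exact h2
  rw [h3, intervalMapAux_coe k ha.2 hb.2]

/-- The function on `π₀(U ∩ D)` associated to a natural transformation. -/
def toFun
    (η : intervalModule k U (fun _ _ _ hx _ hxy _ => hU hxy hx) ⟶
      intervalModule k D (fun _ _ _ _ hz _ hyz => hD hyz hz)) :
    pi0 (U ∩ D) → k :=
  Quotient.lift (fun a : (U ∩ D : Set P) => ((evalAt k U D hU hD η a.2.1 : k)))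
    (by
      intro x y hxy
      induction hxy with
      | rel x y h =>
          rcases h with h | h
          · exact (nat_const k U D hU hD η x.2 y.2 h).symm
          · exact nat_const k U D hU hD η y.2 x.2 h
      | refl x => rfl
      | symm x y _ ih => exact ih.symm
      | trans x y z _ _ ih1 ih2 => exact ih1.trans ih2)

lemma evalAt_add
    (η η' : intervalModule k U (fun _ _ _ hx _ hxy _ => hU hxy hx) ⟶
      intervalModule k D (fun _ _ _ _ hz _ hyz => hD hyz hz))
    {a : P} (h : a ∈ U) :
    evalAt k U D hU hD (η + η') h = evalAt k U D hU hD η h + evalAt k U D hU hD η' h := by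
  show (η + η').app a (oneOf k h) = _
  rw [NatTrans.app_add]
  rfl

lemma evalAt_smul (c : k)
    (η : intervalModule k U (fun _ _ _ hx _ hxy _ => hU hxy hx) ⟶
      intervalModule k D (fun _ _ _ _ hz _ hyz => hD hyz hz))
    {a : P} (h : a ∈ U) :
    evalAt k U D hU hD (c • η) h = c • evalAt k U D hU hD η h := by
  show (c • η).app a (oneOf k h) = _
  rw [NatTrans.app_smul]
  rfl

lemma left_inv_app
    (η : intervalModule k U (fun _ _ _ hx _ hxy _ => hU hxy hx) ⟶
      intervalModule k D (fun _ _ _ _ hz _ hyz => hD hyz hz))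
    (a : P) (x : intervalObj k U a) :
    appAux k U D (toFun k U D hU hD η) a x = η.app a x := by
  by_cases h : a ∈ U ∩ D
  · apply Subtype.ext
    rw [appAux_coe k U D _ h]
    show ((evalAt k U D hU hD η h.1 : k)) * (x : k) = _
    conv_rhs => rw [← smul_oneOf k h.1 x]
    change _ = @Subtype.val k (fun r => r ∈ intervalObj k D a) ((η.app a).hom (((x : k)) • oneOf k h.1))
    erw [map_smul]
    rw [mul_comm]
    rfl
  · rw [appAux_of_not k U D _ h]
    by_cases ha : a ∈ U
    · have hd : a ∉ D := fun hd => h ⟨ha, hd⟩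
      exact (intervalObj_eq_zero k hd (η.app a x)).symm
    · rw [intervalObj_eq_zero k ha x]; exact ((η.app a).hom.map_zero).symm

end

end HomUD

open CategoryTheory in
/-- For an up-set `U` and a down-set `D` in a poset `P`, the space of natural
transformations `Hom(k[U], k[D])` is isomorphic to the space of `k`-valued functions
on the set `π₀(U ∩ D)` of connected components of `U ∩ D`. -/
theorem hom_upset_downset (k : Type) [Field k] {P : Type} [PartialOrder P]
    (U D : Set P) (hU : IsUpperSet U) (hD : IsLowerSet D) :
    Nonempty ((intervalModule k U (fun _ _ _ hx _ hxy _ => hU hxy hx) ⟶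
        intervalModule k D (fun _ _ _ _ hz _ hyz => hD hyz hz)) ≃ₗ[k]
      (pi0 (U ∩ D) → k)) := by
  refine ⟨{ toFun := HomUD.toFun k U D hU hD
            invFun := HomUD.ofFun k U D hU hD
            map_add' := ?_
            map_smul' := ?_
            left_inv := ?_
            right_inv := ?_ }⟩
  · intro η η'
    funext q
    induction q using Quotient.ind with
    | _ a =>
      show ((HomUD.evalAt k U D hU hD (η + η') a.2.1 : k)) = _
      rw [HomUD.evalAt_add]
      rfl
  · intro c η
    funext q
    induction q using Quotient.ind with
    | _ a =>
      show ((HomUD.evalAt k U D hU hD (c • η) a.2.1 : k)) = _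
      rw [HomUD.evalAt_smul]
      rfl
  · intro η
    ext a x
    exact HomUD.left_inv_app k U D hU hD η a x
  · intro f
    funext q
    induction q using Quotient.ind with
    | _ a =>
      show ((HomUD.evalAt k U D hU hD (HomUD.ofFun k U D hU hD f) a.2.1 : k)) = _
      show ((HomUD.appAux k U D f a.1 (HomUD.oneOf k a.2.1) : k)) = _
      rw [HomUD.appAux_coe k U D f a.2, HomUD.coe_oneOf, mul_one]
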